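/- For all real numbers M, Q, Λ and all r > 0, with f(r) = 1 − 2M/r + Q²/r² − Λr²/3 and A(r) = −Q/r, one has (d/dr)(f(r) · A'(r)) − (2/r² + 4Q²/r⁴) · A(r) = 6MQ/r⁴. -/

import Mathlib

lemma derivA (Q : ℝ) {x : ℝ} (hx : x ≠ 0) :
    deriv (fun x : ℝ => -Q / x) x = Q / x ^ 2 := by
  have h := (hasDerivAt_inv hx).const_mul (-Q)
  have e : -Q * -(x ^ 2)⁻¹ = Q / x ^ 2 := by field_simp
  rw [e] at h
  have h2 : (fun y : ℝ => -Q * y⁻¹) = fun y : ℝ => -Q / y := by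
    funext y; rw [div_eq_mul_inv]
  rw [h2] at h
  exact h.deriv

/-- `A_KN = -Q/r` is a particular solution of the inhomogeneous `ℓ = 1` odd-sector
equation `(f A')' − (2/r² + 4Q²/r⁴) A = 6MQ/r⁴` on the Reissner–Nordström (A)dS
background. -/
theorem stmt_9 (M Q Λ : ℝ)
    (f : ℝ → ℝ) (hf : ∀ r : ℝ, f r = 1 - 2 * M / r + Q ^ 2 / r ^ 2 - Λ * r ^ 2 / 3)
    (A : ℝ → ℝ) (hA : ∀ r : ℝ, A r = -Q / r) :
    ∀ r : ℝ, 0 < r →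
      deriv (fun x => f x * deriv A x) r - (2 / r ^ 2 + 4 * Q ^ 2 / r ^ 4) * A r
        = 6 * M * Q / r ^ 4 := by
  intro r hr
  have hr0 : r ≠ 0 := ne_of_gt hr
  set G : ℝ → ℝ := fun x =>
    (1 - 2 * M / x + Q ^ 2 / x ^ 2 - Λ * x ^ 2 / 3) * (Q / x ^ 2) with hG
  have heq : (fun x => f x * deriv A x) =ᶠ[nhds r] G := by
    filter_upwards [eventually_ne_nhds hr0] with x hx
    have hA' : deriv A x = Q / x ^ 2 := by
      have hAe : A = fun x : ℝ => -Q / x := funext hA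
      rw [hAe, derivA Q hx]
    simp [hf, hA', hG]
  rw [heq.deriv_eq]
  have hinv2 : HasDerivAt (fun x : ℝ => (x ^ 2)⁻¹) (-2 / r ^ 3) r := by
    have h := (hasDerivAt_pow 2 r).inv (pow_ne_zero 2 hr0)
    norm_num at h
    refine h.congr_deriv ?_
    field_simp
  have h1 : HasDerivAt (fun x : ℝ => 1 - 2 * M / x + Q ^ 2 / x ^ 2 - Λ * x ^ 2 / 3)
      (2 * M / r ^ 2 - 2 * Q ^ 2 / r ^ 3 - 2 * Λ * r / 3) r := by
    have hsq : HasDerivAt (fun x : ℝ => x ^ 2) (2 * r) r := by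
      simpa using hasDerivAt_pow 2 r
    have hbig : HasDerivAt (fun x : ℝ =>
        1 - 2 * M * x⁻¹ + Q ^ 2 * (x ^ 2)⁻¹ - Λ * x ^ 2 / 3)
        (0 - 2 * M * (-(r ^ 2)⁻¹) + Q ^ 2 * (-2 / r ^ 3) - Λ * (2 * r) / 3) r :=
      (((hasDerivAt_const r (1 : ℝ)).sub
        ((hasDerivAt_inv hr0).const_mul (2 * M))).add
        (hinv2.const_mul (Q ^ 2))).sub ((hsq.const_mul Λ).div_const 3)
    have e : (fun x : ℝ => 1 - 2 * M / x + Q ^ 2 / x ^ 2 - Λ * x ^ 2 / 3)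
        = fun x : ℝ => 1 - 2 * M * x⁻¹ + Q ^ 2 * (x ^ 2)⁻¹ - Λ * x ^ 2 / 3 := by
      funext y; rw [div_eq_mul_inv, div_eq_mul_inv]
    rw [e]
    convert hbig using 1
    field_simp; ring
  have h2 : HasDerivAt (fun x : ℝ => Q / x ^ 2) (-2 * Q / r ^ 3) r := by
    have h := hinv2.const_mul Q
    have e : (fun x : ℝ => Q / x ^ 2) = fun x : ℝ => Q * (x ^ 2)⁻¹ := by
      funext y; rw [div_eq_mul_inv]
    rw [e]
    refine h.congr_deriv ?_
    ring
  have hG' : HasDerivAt G _ r := h1.mul h2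
  rw [hG'.deriv, hA r]
  field_simp
  ring
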